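/- Let s(α) := ∫₀¹ (α/(8πt)) Σ_{k∈ℤ} ( ∫_{2k−1}^{2k+1} e^{−αx²/(8t)} dx )² dt for α > 0. Then lim_{α → ∞} s(α) = 1. -/

import Mathlib

open MeasureTheory Filter Set Real

/-- The error function `erf x = (2/√π) ∫_0^x e^{-s²} ds`. -/
noncomputable def erf (x : ℝ) : ℝ :=
  (2 / Real.sqrt Real.pi) * ∫ s in (0:ℝ)..x, Real.exp (-s ^ 2)

lemma contExp : Continuous fun s : ℝ => Real.exp (-s ^ 2) := by
  continuity

lemma integrableOn_Ioi_gauss : IntegrableOn (fun s : ℝ => Real.exp (-s ^ 2)) (Ioi 0) := by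
  have := (integrable_exp_neg_mul_sq (b := (1:ℝ)) one_pos).integrableOn (s := Ioi 0)
  simpa using this

lemma integral_Ioi_gauss : ∫ s in Ioi (0:ℝ), Real.exp (-s ^ 2) = Real.sqrt Real.pi / 2 := by
  have := integral_gaussian_Ioi (1 : ℝ)
  simpa using this

lemma erf_nonneg {x : ℝ} (hx : 0 ≤ x) : 0 ≤ erf x := by
  apply mul_nonneg (by positivity)
  exact intervalIntegral.integral_nonneg hx fun s _ => (Real.exp_pos _).le

lemma erf_le_one {x : ℝ} (hx : 0 ≤ x) : erf x ≤ 1 := by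
  have h1 : ∫ s in (0:ℝ)..x, Real.exp (-s ^ 2) ≤ Real.sqrt Real.pi / 2 := by
    rw [intervalIntegral.integral_of_le hx, ← integral_Ioi_gauss]
    apply setIntegral_mono_set integrableOn_Ioi_gauss
    · exact Eventually.of_forall fun s => (Real.exp_pos _).le
    · exact HasSubset.Subset.eventuallyLE Ioc_subset_Ioi_self
  have hπ : (0:ℝ) < Real.sqrt Real.pi := Real.sqrt_pos.2 Real.pi_pos
  calc erf x ≤ (2 / Real.sqrt Real.pi) * (Real.sqrt Real.pi / 2) := by
        apply mul_le_mul_of_nonneg_left h1 (by positivity)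
    _ = 1 := by field_simp

lemma erf_tendsto : Tendsto erf atTop (nhds 1) := by
  have h : Tendsto (fun x : ℝ => ∫ s in (0:ℝ)..x, Real.exp (-s ^ 2)) atTop
      (nhds (Real.sqrt Real.pi / 2)) := by
    rw [← integral_Ioi_gauss]
    exact intervalIntegral_tendsto_integral_Ioi 0 integrableOn_Ioi_gauss tendsto_id
  have hπ : (0:ℝ) < Real.sqrt Real.pi := Real.sqrt_pos.2 Real.pi_pos
  have := h.const_mul (2 / Real.sqrt Real.pi)
  convert this using 2
  · rfl
  · field_simp

lemma sqrt_tendsto_atTop : Tendsto Real.sqrt atTop atTop := by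
  refine tendsto_atTop_atTop.mpr fun b => ⟨(max b 0) ^ 2, fun a ha => ?_⟩
  have h := Real.sqrt_le_sqrt ha
  rw [Real.sqrt_sq (le_max_right _ _)] at h
  exact le_trans (le_max_left b 0) h

lemma integral_neg_one_one_gauss {c : ℝ} (hc : 0 < c) :
    ∫ x in (-1:ℝ)..1, Real.exp (-(c * x ^ 2)) =
      Real.sqrt Real.pi / Real.sqrt c * erf (Real.sqrt c) := by
  set b := Real.sqrt c with hb
  have hb0 : 0 < b := Real.sqrt_pos.2 hc
  have hb2 : b ^ 2 = c := Real.sq_sqrt hc.le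
  have key : ∀ x : ℝ, Real.exp (-(c * x ^ 2)) = (fun u => Real.exp (-u ^ 2)) (b * x) := by
    intro x; simp only [mul_pow, hb2]
  calc ∫ x in (-1:ℝ)..1, Real.exp (-(c * x ^ 2))
      = ∫ x in (-1:ℝ)..1, (fun u => Real.exp (-u ^ 2)) (b * x) := by
        simp only [key]
    _ = b⁻¹ • ∫ u in (b * -1)..(b * 1), Real.exp (-u ^ 2) :=
        intervalIntegral.integral_comp_mul_left (fun u => Real.exp (-u ^ 2)) hb0.ne'
    _ = b⁻¹ * ∫ u in (-b)..b, Real.exp (-u ^ 2) := by norm_num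
    _ = Real.sqrt Real.pi / Real.sqrt c * erf (Real.sqrt c) := by
        have hsplit : (∫ u in (-b)..(0:ℝ), Real.exp (-u ^ 2)) +
            ∫ u in (0:ℝ)..b, Real.exp (-u ^ 2) = ∫ u in (-b)..b, Real.exp (-u ^ 2) :=
          intervalIntegral.integral_add_adjacent_intervals
            (contExp.intervalIntegrable _ _) (contExp.intervalIntegrable _ _)
        have heven : (∫ u in (-b)..(0:ℝ), Real.exp (-u ^ 2)) =
            ∫ u in (0:ℝ)..b, Real.exp (-u ^ 2) := by
          have h := intervalIntegral.integral_comp_neg (a := (0:ℝ)) (b := b)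
            (fun u => Real.exp (-u ^ 2))
          simp only [neg_sq, neg_zero] at h
          exact h.symm
        rw [← hsplit, heven, erf]
        have hπ : (0:ℝ) < Real.sqrt Real.pi := Real.sqrt_pos.2 Real.pi_pos
        field_simp [hb]
        ring

lemma iUnion_Ioc_eq_univ :
    (⋃ k : ℤ, Ioc (2 * (k:ℝ) - 1) (2 * (k:ℝ) + 1)) = univ := by
  ext x
  simp only [mem_iUnion, mem_Ioc, mem_univ, iff_true]
  refine ⟨⌈(x - 1) / 2⌉, ?_, ?_⟩
  · have h := Int.ceil_lt_add_one ((x - 1) / 2)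
    have : (⌈(x - 1) / 2⌉ : ℝ) < (x - 1) / 2 + 1 := h
    linarith
  · have h := Int.le_ceil ((x - 1) / 2)
    linarith

lemma pairwise_disjoint_Ioc :
    Pairwise (Function.onFun Disjoint fun k : ℤ =>
      Ioc (2 * (k:ℝ) - 1) (2 * (k:ℝ) + 1)) := by
  intro i j hij
  have hij' : (i:ℝ) ≠ (j:ℝ) := by exact_mod_cast hij
  rw [Function.onFun, Set.Ioc_disjoint_Ioc]
  rcases lt_or_gt_of_ne hij with h | h
  · have : (i:ℝ) + 1 ≤ (j:ℝ) := by exact_mod_cast h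
    calc min (2 * (i:ℝ) + 1) (2 * (j:ℝ) + 1) ≤ 2 * (i:ℝ) + 1 := min_le_left _ _
      _ ≤ 2 * (j:ℝ) - 1 := by linarith
      _ ≤ max (2 * (i:ℝ) - 1) (2 * (j:ℝ) - 1) := le_max_right _ _
  · have : (j:ℝ) + 1 ≤ (i:ℝ) := by exact_mod_cast h
    calc min (2 * (i:ℝ) + 1) (2 * (j:ℝ) + 1) ≤ 2 * (j:ℝ) + 1 := min_le_right _ _
      _ ≤ 2 * (i:ℝ) - 1 := by linarith
      _ ≤ max (2 * (i:ℝ) - 1) (2 * (j:ℝ) - 1) := le_max_left _ _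

lemma hasSum_pieces {c : ℝ} (hc : 0 < c) :
    HasSum (fun k : ℤ => ∫ x in Ioc (2 * (k:ℝ) - 1) (2 * (k:ℝ) + 1),
        Real.exp (-(c * x ^ 2)))
      (Real.sqrt (Real.pi / c)) := by
  have hint : Integrable (fun x : ℝ => Real.exp (-(c * x ^ 2))) := by
    have := integrable_exp_neg_mul_sq hc
    simpa [neg_mul] using this
  have h := MeasureTheory.hasSum_integral_iUnion
    (fun k : ℤ => measurableSet_Ioc) pairwise_disjoint_Ioc
    (hint.integrableOn (s := ⋃ k : ℤ, Ioc (2 * (k:ℝ) - 1) (2 * (k:ℝ) + 1)))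
  rw [iUnion_Ioc_eq_univ] at h
  have htot : ∫ x in (univ : Set ℝ), Real.exp (-(c * x ^ 2)) = Real.sqrt (Real.pi / c) := by
    rw [setIntegral_univ]
    have := integral_gaussian c
    simpa [neg_mul] using this
  rwa [htot] at h

lemma a_zero_eq {c : ℝ} (hc : 0 < c) :
    (∫ x in (2 * ((0:ℤ):ℝ) - 1)..(2 * ((0:ℤ):ℝ) + 1), Real.exp (-(c * x ^ 2))) =
      Real.sqrt Real.pi / Real.sqrt c * erf (Real.sqrt c) := by
  rw [show (2 * ((0:ℤ):ℝ) - 1) = -1 by norm_num, show (2 * ((0:ℤ):ℝ) + 1) = 1 by norm_num]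
  exact integral_neg_one_one_gauss hc

lemma a_le_a_zero {c : ℝ} (hc : 0 < c) (k : ℤ) :
    (∫ x in (2 * (k:ℝ) - 1)..(2 * (k:ℝ) + 1), Real.exp (-(c * x ^ 2))) ≤
      ∫ x in (-1:ℝ)..1, Real.exp (-(c * x ^ 2)) := by
  have h1 : (∫ x in (2 * (k:ℝ) - 1)..(2 * (k:ℝ) + 1), Real.exp (-(c * x ^ 2))) =
      ∫ x in (-1:ℝ)..1, Real.exp (-(c * (x + 2 * (k:ℝ)) ^ 2)) := by
    rw [intervalIntegral.integral_comp_add_right (fun x => Real.exp (-(c * x ^ 2))) (2 * (k:ℝ))]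
    rw [show (-1 + 2 * (k:ℝ)) = 2 * (k:ℝ) - 1 by ring, show (1 + 2 * (k:ℝ)) = 2 * (k:ℝ) + 1 by ring]
  rw [h1]
  apply intervalIntegral.integral_mono_on (by norm_num)
    ((Continuous.intervalIntegrable (by continuity) _ _))
    (Continuous.intervalIntegrable (by continuity) _ _)
  intro x hx
  simp only [mem_Icc] at hx
  apply Real.exp_le_exp.2
  have hsq : x ^ 2 ≤ (x + 2 * (k:ℝ)) ^ 2 := by
    rcases lt_trichotomy k 0 with h | h | h
    · have hk : k ≤ -1 := by omega
      have : (k:ℝ) ≤ -1 := by exact_mod_cast hk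
      nlinarith [hx.1, hx.2]
    · simp [h]
    · have : (1:ℝ) ≤ (k:ℝ) := by exact_mod_cast h
      nlinarith [hx.1, hx.2]
  nlinarith

lemma key_bounds {c : ℝ} (hc : 0 < c) :
    erf (Real.sqrt c) ^ 2 ≤ (c / Real.pi) *
        ∑' k : ℤ, (∫ x in (2 * (k:ℝ) - 1)..(2 * (k:ℝ) + 1), Real.exp (-(c * x ^ 2))) ^ 2 ∧
      (c / Real.pi) *
        ∑' k : ℤ, (∫ x in (2 * (k:ℝ) - 1)..(2 * (k:ℝ) + 1), Real.exp (-(c * x ^ 2))) ^ 2 ≤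
          erf (Real.sqrt c) := by
  set a : ℤ → ℝ := fun k => ∫ x in (2 * (k:ℝ) - 1)..(2 * (k:ℝ) + 1), Real.exp (-(c * x ^ 2))
    with ha_def
  have ha_set : ∀ k : ℤ, a k = ∫ x in Ioc (2 * (k:ℝ) - 1) (2 * (k:ℝ) + 1),
      Real.exp (-(c * x ^ 2)) := fun k =>
    intervalIntegral.integral_of_le (by linarith)
  have hsum : HasSum a (Real.sqrt (Real.pi / c)) := by
    have := hasSum_pieces hc
    rwa [show (fun k : ℤ => ∫ x in Ioc (2 * (k:ℝ) - 1) (2 * (k:ℝ) + 1),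
      Real.exp (-(c * x ^ 2))) = a from (funext fun k => (ha_set k).symm)] at this
  have hnn : ∀ k, 0 ≤ a k := fun k =>
    intervalIntegral.integral_nonneg (by linarith) fun x _ => (Real.exp_pos _).le
  have ha0 : a 0 = Real.sqrt Real.pi / Real.sqrt c * erf (Real.sqrt c) := a_zero_eq hc
  have hle : ∀ k, a k ≤ a 0 := by
    intro k
    have := a_le_a_zero hc k
    rw [ha_def]
    simpa using this
  have hsq_le : ∀ k, a k ^ 2 ≤ a 0 * a k := fun k => by nlinarith [hnn k, hle k]
  have hsum2 : Summable fun k => a k ^ 2 :=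
    Summable.of_nonneg_of_le (fun k => sq_nonneg _) hsq_le (hsum.summable.mul_left (a 0))
  have hlow : a 0 ^ 2 ≤ ∑' k, a k ^ 2 :=
    Summable.le_tsum hsum2 0 fun k _ => sq_nonneg _
  have hup : (∑' k, a k ^ 2) ≤ a 0 * Real.sqrt (Real.pi / c) := by
    calc (∑' k, a k ^ 2) ≤ ∑' k, a 0 * a k :=
          Summable.tsum_le_tsum hsq_le hsum2 (hsum.summable.mul_left (a 0))
      _ = a 0 * ∑' k, a k := tsum_mul_left
      _ = a 0 * Real.sqrt (Real.pi / c) := by rw [hsum.tsum_eq]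
  have hsc : (0:ℝ) < Real.sqrt c := Real.sqrt_pos.2 hc
  have hsp : (0:ℝ) < Real.sqrt Real.pi := Real.sqrt_pos.2 Real.pi_pos
  have hscc : Real.sqrt c ^ 2 = c := Real.sq_sqrt hc.le
  have hspp : Real.sqrt Real.pi ^ 2 = Real.pi := Real.sq_sqrt Real.pi_pos.le
  have hdiv : Real.sqrt (Real.pi / c) = Real.sqrt Real.pi / Real.sqrt c :=
    Real.sqrt_div Real.pi_pos.le c
  have hcpos : (0:ℝ) < c / Real.pi := div_pos hc Real.pi_pos
  constructor
  · have h1 : (c / Real.pi) * a 0 ^ 2 = erf (Real.sqrt c) ^ 2 := by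
      rw [ha0]; field_simp; linear_combination c * erf (Real.sqrt c) ^ 2 * hspp - erf (Real.sqrt c) ^ 2 * Real.pi * hscc
    calc erf (Real.sqrt c) ^ 2 = (c / Real.pi) * a 0 ^ 2 := h1.symm
      _ ≤ (c / Real.pi) * ∑' k, a k ^ 2 := by
          exact mul_le_mul_of_nonneg_left hlow hcpos.le
  · have h2 : (c / Real.pi) * (a 0 * Real.sqrt (Real.pi / c)) = erf (Real.sqrt c) := by
      rw [ha0, hdiv]; field_simp; linear_combination c * erf (Real.sqrt c) * hspp - erf (Real.sqrt c) * Real.pi * hscc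
    calc (c / Real.pi) * ∑' k, a k ^ 2
        ≤ (c / Real.pi) * (a 0 * Real.sqrt (Real.pi / c)) :=
          mul_le_mul_of_nonneg_left hup hcpos.le
      _ = erf (Real.sqrt c) := h2

lemma summable_sq_Ioc {c : ℝ} (hc : 0 < c) :
    Summable fun k : ℤ => (∫ x in Ioc (2 * (k:ℝ) - 1) (2 * (k:ℝ) + 1),
      Real.exp (-(c * x ^ 2))) ^ 2 := by
  set s : ℤ → ℝ := fun k => ∫ x in Ioc (2 * (k:ℝ) - 1) (2 * (k:ℝ) + 1),
    Real.exp (-(c * x ^ 2)) with hs_def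
  have hsum : HasSum s (Real.sqrt (Real.pi / c)) := hasSum_pieces hc
  have hset : ∀ k : ℤ, s k = ∫ x in (2 * (k:ℝ) - 1)..(2 * (k:ℝ) + 1),
      Real.exp (-(c * x ^ 2)) := fun k =>
    (intervalIntegral.integral_of_le (by linarith)).symm
  have hnn : ∀ k, 0 ≤ s k := fun k => by
    rw [hset k]
    exact intervalIntegral.integral_nonneg (by linarith) fun x _ => (Real.exp_pos _).le
  have hle : ∀ k, s k ≤ s 0 := by
    intro k
    rw [hset k, hset 0]
    rw [show (2 * ((0:ℤ):ℝ) - 1) = -1 by norm_num, show (2 * ((0:ℤ):ℝ) + 1) = 1 by norm_num]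
    exact a_le_a_zero hc k
  exact Summable.of_nonneg_of_le (fun k => sq_nonneg _)
    (fun k => by nlinarith [hnn k, hle k]) (hsum.summable.mul_left (s 0))

lemma bounds_t {α t : ℝ} (hα : 0 < α) (ht : 0 < t) :
    erf (Real.sqrt (α / (8 * t))) ^ 2 ≤ (α / (8 * Real.pi * t)) *
        ∑' k : ℤ, (∫ x in (2 * (k:ℝ) - 1)..(2 * (k:ℝ) + 1),
          Real.exp (-(α * x ^ 2) / (8 * t))) ^ 2 ∧
      (α / (8 * Real.pi * t)) *
        ∑' k : ℤ, (∫ x in (2 * (k:ℝ) - 1)..(2 * (k:ℝ) + 1),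
          Real.exp (-(α * x ^ 2) / (8 * t))) ^ 2 ≤ erf (Real.sqrt (α / (8 * t))) := by
  have hc : 0 < α / (8 * t) := by positivity
  have hexp : ∀ x : ℝ, Real.exp (-(α * x ^ 2) / (8 * t)) =
      Real.exp (-(α / (8 * t) * x ^ 2)) := fun x => by congr 1; ring
  have hcoef : α / (8 * Real.pi * t) = α / (8 * t) / Real.pi := by
    rw [div_div]; congr 1; ring
  simp only [hexp, hcoef]
  exact key_bounds hc

lemma aesm_F {α : ℝ} (hα : 0 < α) :
    AEStronglyMeasurable (fun t : ℝ => (α / (8 * Real.pi * t)) *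
        ∑' k : ℤ, (∫ x in (2 * (k:ℝ) - 1)..(2 * (k:ℝ) + 1),
          Real.exp (-(α * x ^ 2) / (8 * t))) ^ 2)
      (volume.restrict (Ioc (0:ℝ) 1)) := by
  set G : ℤ → ℝ → ℝ := fun k t => ∫ x in Ioc (2 * (k:ℝ) - 1) (2 * (k:ℝ) + 1),
    Real.exp (-(α * x ^ 2) / (8 * t)) with hG_def
  have hGm : ∀ k : ℤ, Measurable (G k) := by
    intro k
    have hm : StronglyMeasurable fun p : ℝ × ℝ => Real.exp (-(α * p.2 ^ 2) / (8 * p.1)) := by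
      apply Measurable.stronglyMeasurable
      exact Real.measurable_exp.comp
        (((measurable_const.mul ((measurable_snd.pow measurable_const))).neg).div
          (measurable_const.mul measurable_fst))
    exact hm.integral_prod_right'.measurable
  have hcoefm : Measurable fun t : ℝ => α / (8 * Real.pi * t) :=
    measurable_const.div (measurable_const.mul measurable_id)
  have hφm : Measurable fun t : ℝ => (α / (8 * Real.pi * t)) *
      (∑' k : ℤ, ENNReal.ofReal ((G k t) ^ 2)).toReal := by
    apply hcoefm.mul
    apply ENNReal.measurable_toReal.comp
    exact Measurable.ennreal_tsum fun k =>
      ENNReal.measurable_ofReal.comp ((hGm k).pow measurable_const)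
  apply hφm.aestronglyMeasurable.congr
  filter_upwards [ae_restrict_mem measurableSet_Ioc] with t ht
  have ht0 : (0:ℝ) < t := ht.1
  have hc : 0 < α / (8 * t) := by positivity
  have hexp : ∀ x : ℝ, Real.exp (-(α * x ^ 2) / (8 * t)) =
      Real.exp (-(α / (8 * t) * x ^ 2)) := fun x => by congr 1; ring
  have hsummable : Summable fun k : ℤ => (G k t) ^ 2 := by
    have := summable_sq_Ioc hc
    simpa only [hG_def, hexp] using this
  have htsum : (∑' k : ℤ, ENNReal.ofReal ((G k t) ^ 2)).toReal =
      ∑' k : ℤ, (G k t) ^ 2 := by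
    rw [← ENNReal.ofReal_tsum_of_nonneg (fun k => sq_nonneg _) hsummable,
      ENNReal.toReal_ofReal (tsum_nonneg fun k => sq_nonneg _)]
  rw [htsum]
  congr 1
  exact tsum_congr fun k => by
    rw [intervalIntegral.integral_of_le (by linarith : 2 * (k:ℝ) - 1 ≤ 2 * (k:ℝ) + 1)]

lemma erf_continuous : Continuous erf :=
  continuous_const.mul
    (intervalIntegral.continuous_primitive (fun _ _ => contExp.intervalIntegrable _ _) 0)

lemma psi_measurable (α : ℝ) :
    Measurable fun t : ℝ => erf (Real.sqrt (α / (8 * t))) :=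
  (erf_continuous.comp Real.continuous_sqrt).measurable.comp
    (measurable_const.div (measurable_const.mul measurable_id))

lemma psi_mem (α t : ℝ) : 0 ≤ erf (Real.sqrt (α / (8 * t))) ∧
    erf (Real.sqrt (α / (8 * t))) ≤ 1 :=
  ⟨erf_nonneg (Real.sqrt_nonneg _), erf_le_one (Real.sqrt_nonneg _)⟩

lemma integrable_one_Ioc : Integrable (fun _ : ℝ => (1:ℝ)) (volume.restrict (Ioc (0:ℝ) 1)) := by
  refine integrableOn_const ?_
  simp [Real.volume_Ioc]

lemma psi_tendsto_ae : ∀ᵐ t ∂(volume.restrict (Ioc (0:ℝ) 1)),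
    Tendsto (fun α : ℝ => erf (Real.sqrt (α / (8 * t)))) atTop (nhds 1) := by
  filter_upwards [ae_restrict_mem measurableSet_Ioc] with t ht
  have h1 : Tendsto (fun α : ℝ => α / (8 * t)) atTop atTop :=
    Tendsto.atTop_div_const (by nlinarith [ht.1] : (0:ℝ) < 8 * t) tendsto_id
  exact erf_tendsto.comp (sqrt_tendsto_atTop.comp h1)

lemma tendsto_upper : Tendsto (fun α : ℝ => ∫ t in Ioc (0:ℝ) 1,
    erf (Real.sqrt (α / (8 * t)))) atTop (nhds 1) := by
  have h := tendsto_integral_filter_of_dominated_convergence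
    (μ := volume.restrict (Ioc (0:ℝ) 1)) (l := atTop)
    (F := fun α t => erf (Real.sqrt (α / (8 * t)))) (f := fun _ => (1:ℝ))
    (bound := fun _ => (1:ℝ))
    (Eventually.of_forall fun α => (psi_measurable α).aestronglyMeasurable)
    (Eventually.of_forall fun α => Eventually.of_forall fun t => by
      rw [Real.norm_eq_abs, abs_le]
      exact ⟨by linarith [(psi_mem α t).1], (psi_mem α t).2⟩)
    integrable_one_Ioc
    psi_tendsto_ae
  simpa [Real.volume_Ioc] using h

lemma tendsto_lower : Tendsto (fun α : ℝ => ∫ t in Ioc (0:ℝ) 1,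
    erf (Real.sqrt (α / (8 * t))) ^ 2) atTop (nhds 1) := by
  have hlim : ∀ᵐ t ∂(volume.restrict (Ioc (0:ℝ) 1)),
      Tendsto (fun α : ℝ => erf (Real.sqrt (α / (8 * t))) ^ 2) atTop (nhds 1) := by
    filter_upwards [psi_tendsto_ae] with t ht
    have := ht.pow 2
    simpa using this
  have h := tendsto_integral_filter_of_dominated_convergence
    (μ := volume.restrict (Ioc (0:ℝ) 1)) (l := atTop)
    (F := fun α t => erf (Real.sqrt (α / (8 * t))) ^ 2) (f := fun _ => (1:ℝ))
    (bound := fun _ => (1:ℝ))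
    (Eventually.of_forall fun α => ((psi_measurable α).pow measurable_const).aestronglyMeasurable)
    (Eventually.of_forall fun α => Eventually.of_forall fun t => by
      rw [Real.norm_eq_abs, abs_le]
      constructor
      · nlinarith [sq_nonneg (erf (Real.sqrt (α / (8 * t))))]
      · nlinarith [(psi_mem α t).1, (psi_mem α t).2])
    integrable_one_Ioc
    hlim
  simpa [Real.volume_Ioc] using h

/-- `c(α) = ∫_0^1 erf(√(α/(8t))) dt`. -/
noncomputable def cFun (α : ℝ) : ℝ :=
  ∫ t in (0:ℝ)..1, erf (Real.sqrt (α / (8 * t)))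

/-- `s(α) = ∫_0^1 (α/(8πt)) Σ_{k∈ℤ} (∫_{2k-1}^{2k+1} e^{-αx²/(8t)} dx)² dt`. -/
noncomputable def sFun (α : ℝ) : ℝ :=
  ∫ t in (0:ℝ)..1, (α / (8 * Real.pi * t)) *
    ∑' k : ℤ, (∫ x in (2 * (k : ℝ) - 1)..(2 * (k : ℝ) + 1),
      Real.exp (-(α * x ^ 2) / (8 * t))) ^ 2

/-- `s(α) → 1` as `α → ∞`. -/
theorem sFun_tendsto_one : Tendsto sFun atTop (nhds 1) := by
  have hs : ∀ α : ℝ, sFun α = ∫ t in Ioc (0:ℝ) 1, (α / (8 * Real.pi * t)) *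
      ∑' k : ℤ, (∫ x in (2 * (k : ℝ) - 1)..(2 * (k : ℝ) + 1),
        Real.exp (-(α * x ^ 2) / (8 * t))) ^ 2 := fun α =>
    intervalIntegral.integral_of_le zero_le_one
  apply tendsto_of_tendsto_of_tendsto_of_le_of_le' tendsto_lower tendsto_upper
  · filter_upwards [eventually_gt_atTop (0:ℝ)] with α hα
    rw [hs]
    have hFint : Integrable (fun t : ℝ => (α / (8 * Real.pi * t)) *
        ∑' k : ℤ, (∫ x in (2 * (k : ℝ) - 1)..(2 * (k : ℝ) + 1),
          Real.exp (-(α * x ^ 2) / (8 * t))) ^ 2) (volume.restrict (Ioc (0:ℝ) 1)) := by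
      apply Integrable.mono' integrable_one_Ioc (aesm_F hα)
      filter_upwards [ae_restrict_mem measurableSet_Ioc] with t ht
      rw [Real.norm_eq_abs, abs_le]
      obtain ⟨h1, h2⟩ := bounds_t hα ht.1
      refine ⟨by nlinarith [sq_nonneg (erf (Real.sqrt (α / (8 * t))))], ?_⟩
      exact le_trans h2 (psi_mem α t).2
    apply integral_mono_of_nonneg (Eventually.of_forall fun t => sq_nonneg _) hFint
    filter_upwards [ae_restrict_mem measurableSet_Ioc] with t ht
    exact (bounds_t hα ht.1).1
  · filter_upwards [eventually_gt_atTop (0:ℝ)] with α hα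
    rw [hs]
    apply integral_mono_of_nonneg
    · filter_upwards [ae_restrict_mem measurableSet_Ioc] with t ht
      exact le_trans (sq_nonneg _) (bounds_t hα ht.1).1
    · apply Integrable.mono' integrable_one_Ioc (psi_measurable α).aestronglyMeasurable
      exact Eventually.of_forall fun t => by
        rw [Real.norm_eq_abs, abs_le]
        exact ⟨by linarith [(psi_mem α t).1], (psi_mem α t).2⟩
    · filter_upwards [ae_restrict_mem measurableSet_Ioc] with t ht
      exact (bounds_t hα ht.1).2
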